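/- Let f: S → 𝐇^{4,2} be a spacelike holomorphic curve with induced complex structure 𝔧 and second fundamental form II. Then for all vector fields X, Y on S: II(𝔧X, Y) = II(X, 𝔧Y) = 𝐉(II(X,Y)), where 𝐉 is the almost complex structure on 𝐇^{4,2}. Consequently, for a local orthonormal frame (X₁, X₂) with 𝔧X₁ = X₂, one has II(X₂,X₂) = -II(X₁,X₁), so f has vanishing mean curvature. -/

import Mathlib

open scoped Quaternion

noncomputable section

/-- The split quaternions: `j² = -1`, `δ² = ε² = 1`, `j·δ = -δ·j = ε`
(realized as `i, j, k` in `ℍ[ℝ, -1, 1]`). -/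
abbrev H' : Type := ℍ[ℝ, -1, 1]

/-- The split octonions, as pairs of split quaternions (Cayley–Dickson doubling). -/
abbrev SplitOct : Type := H' × H'

namespace SplitOct

/-- Split octonion multiplication:
`(x₁,y₁)·(x₂,y₂) = (x₁x₂ - ȳ₂y₁, y₂x₁ + y₁x̄₂)`. -/
def omul (z w : SplitOct) : SplitOct :=
  (z.1 * w.1 - star w.2 * z.2, w.2 * z.1 + z.2 * star w.1)

scoped infixl:70 " ⬝ " => omul

/-- The unit `1 = (1,0)`. -/
def oone : SplitOct := (1, 0)

/-- Octonion conjugation `(x,y) ↦ (x̄, -y)`. -/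
def oconj (z : SplitOct) : SplitOct := (star z.1, -z.2)

/-- Real part. -/
def oRe (z : SplitOct) : ℝ := z.1.re

/-- Imaginary part, as a split octonion. -/
def oIm (z : SplitOct) : SplitOct := (z.1 - algebraMap ℝ H' z.1.re, z.2)

/-- Membership in the imaginary split octonions `Im(𝕆')`. -/
def IsIm (z : SplitOct) : Prop := z.1.re = 0

/-- The bilinear form `⟨z,w⟩ = Re (z·w)` on imaginary split octonions. -/
def oin (z w : SplitOct) : ℝ := oRe (z ⬝ w)

/-- The cross product `z × w = Im (z·w)`. -/
def ocross (z w : SplitOct) : SplitOct := oIm (z ⬝ w)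

/-- The quadratic form `q(z) = ⟨z,z⟩`. -/
def q (z : SplitOct) : ℝ := oin z z

def j : SplitOct := ((⟨0,1,0,0⟩ : H'), 0)
def δ' : SplitOct := ((⟨0,0,1,0⟩ : H'), 0)
def ε' : SplitOct := ((⟨0,0,0,1⟩ : H'), 0)
def ℓ' : SplitOct := (0, 1)
def jℓ : SplitOct := (0, (⟨0,1,0,0⟩ : H'))
def δℓ : SplitOct := (0, (⟨0,0,1,0⟩ : H'))
def εℓ : SplitOct := (0, (⟨0,0,0,1⟩ : H'))

end SplitOct

namespace SplitOct

instance : NormedAddCommGroup H' :=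
  NormedAddCommGroup.induced H' (Fin 4 → ℝ)
    (QuaternionAlgebra.linearEquivTuple (-1 : ℝ) (0 : ℝ) (1 : ℝ)).toLinearMap
    (LinearEquiv.injective _)

instance : NormedSpace ℝ H' :=
  NormedSpace.induced ℝ H' (Fin 4 → ℝ)
    (QuaternionAlgebra.linearEquivTuple (-1 : ℝ) (0 : ℝ) (1 : ℝ)).toLinearMap

/-- The second derivative of a map `ℂ → Im(𝕆')` in the directions `v, w`
(the flat ambient derivative `D_w (df(v))`). -/
def D2 (f : ℂ → SplitOct) (p : ℂ) (v w : ℂ) : SplitOct :=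
  fderiv ℝ (fun x => fderiv ℝ f x v) p w

/-- Let `f` be a spacelike holomorphic curve in `𝐇^{4,2}` (written in a
local conformal coordinate `z ∈ ℂ`, so that the induced complex structure `𝔧` is
multiplication by `i` and `df ∘ 𝔧 = 𝐉 ∘ df` where `𝐉_z = z × ·`). Then the second
fundamental form `II` (the component of the ambient second derivative normal to the
surface inside `T𝐇^{4,2}`) satisfies `II(𝔧X,Y) = II(X,𝔧Y) = 𝐉(II(X,Y))`: modulo the
span of `f(p)` (the radial direction) and of `∂₁f, ∂₂f` (the tangent plane), the
second derivative in directions `(𝔧X, Y)` or `(X, 𝔧Y)` equals `𝐉` of the one in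
directions `(X,Y)`. Consequently `II(X₂,X₂) = -II(X₁,X₁)` for an orthonormal frame
with `𝔧X₁ = X₂`, i.e. `f` has vanishing mean curvature: the Laplacian
`D²f(1,1) + D²f(i,i)` is tangential-plus-radial. -/
instance : FiniteDimensional ℝ H' :=
  (QuaternionAlgebra.linearEquivTuple (-1 : ℝ) (0 : ℝ) (1 : ℝ)).symm.finiteDimensional

set_option maxHeartbeats 1000000 in
lemma L1' (a : SplitOct) (ha : IsIm a) : ocross a a = 0 := by
  obtain ⟨⟨r,x1,x2,x3⟩, y⟩ := a
  simp only [IsIm] at ha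
  subst ha
  ext <;> simp [ocross, oIm, omul, QuaternionAlgebra.ext_iff, QuaternionAlgebra.re_mul,
    QuaternionAlgebra.imI_mul, QuaternionAlgebra.imJ_mul, QuaternionAlgebra.imK_mul] <;> ring

set_option maxHeartbeats 1000000 in
lemma L2' (a b : SplitOct) (ha : IsIm a) (hb : IsIm b) : ocross a b = - ocross b a := by
  obtain ⟨⟨r,x1,x2,x3⟩, y⟩ := a
  obtain ⟨⟨s,z1,z2,z3⟩, w⟩ := b
  simp only [IsIm] at ha hb
  subst ha; subst hb
  ext <;> simp [ocross, oIm, omul, QuaternionAlgebra.ext_iff, QuaternionAlgebra.re_mul,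
    QuaternionAlgebra.imI_mul, QuaternionAlgebra.imJ_mul, QuaternionAlgebra.imK_mul] <;> ring

set_option maxHeartbeats 4000000 in
lemma L3' (u v : SplitOct) (hu : IsIm u) (hv : IsIm v) :
    ocross u (ocross v u) = oin u v • u - q u • v := by
  obtain ⟨⟨r,x1,x2,x3⟩, y⟩ := u
  obtain ⟨⟨s,z1,z2,z3⟩, w⟩ := v
  obtain ⟨y0,y1,y2,y3⟩ := y
  obtain ⟨w0,w1,w2,w3⟩ := w
  simp only [IsIm] at hu hv
  subst hu; subst hv
  ext <;> simp [ocross, oIm, oin, oRe, q, omul, QuaternionAlgebra.ext_iff, QuaternionAlgebra.re_mul,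
    QuaternionAlgebra.imI_mul, QuaternionAlgebra.imJ_mul, QuaternionAlgebra.imK_mul] <;> ring

set_option maxHeartbeats 1000000 in
lemma ocross_add_left (z z' w : SplitOct) :
    ocross (z + z') w = ocross z w + ocross z' w := by
  obtain ⟨x, y⟩ := z; obtain ⟨x', y'⟩ := z'; obtain ⟨u, v⟩ := w
  ext <;> simp [ocross, oIm, omul, QuaternionAlgebra.ext_iff, QuaternionAlgebra.re_mul,
    QuaternionAlgebra.imI_mul, QuaternionAlgebra.imJ_mul, QuaternionAlgebra.imK_mul] <;> ring

set_option maxHeartbeats 1000000 in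
lemma ocross_add_right (z w w' : SplitOct) :
    ocross z (w + w') = ocross z w + ocross z w' := by
  obtain ⟨x, y⟩ := z; obtain ⟨u, v⟩ := w; obtain ⟨u', v'⟩ := w'
  ext <;> simp [ocross, oIm, omul, QuaternionAlgebra.ext_iff, QuaternionAlgebra.re_mul,
    QuaternionAlgebra.imI_mul, QuaternionAlgebra.imJ_mul, QuaternionAlgebra.imK_mul] <;> ring

set_option maxHeartbeats 1000000 in
lemma ocross_smul_left (r : ℝ) (z w : SplitOct) :
    ocross (r • z) w = r • ocross z w := by
  obtain ⟨x, y⟩ := z; obtain ⟨u, v⟩ := w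
  ext <;> simp [ocross, oIm, omul, QuaternionAlgebra.ext_iff, QuaternionAlgebra.re_mul,
    QuaternionAlgebra.imI_mul, QuaternionAlgebra.imJ_mul, QuaternionAlgebra.imK_mul] <;> ring

set_option maxHeartbeats 1000000 in
lemma ocross_smul_right (r : ℝ) (z w : SplitOct) :
    ocross z (r • w) = r • ocross z w := by
  obtain ⟨x, y⟩ := z; obtain ⟨u, v⟩ := w
  ext <;> simp [ocross, oIm, omul, QuaternionAlgebra.ext_iff, QuaternionAlgebra.re_mul,
    QuaternionAlgebra.imI_mul, QuaternionAlgebra.imJ_mul, QuaternionAlgebra.imK_mul] <;> ring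

lemma ocross_neg_right (z w : SplitOct) : ocross z (-w) = -(ocross z w) := by
  simpa using ocross_smul_right (-1) z w

def ocrossₗ : SplitOct →ₗ[ℝ] SplitOct →ₗ[ℝ] SplitOct :=
  LinearMap.mk₂ ℝ ocross ocross_add_left ocross_smul_left ocross_add_right ocross_smul_right

def ocrossL : SplitOct →L[ℝ] SplitOct →L[ℝ] SplitOct :=
  LinearMap.toContinuousLinearMap
    ((LinearMap.toContinuousLinearMap :
        (SplitOct →ₗ[ℝ] SplitOct) ≃ₗ[ℝ] (SplitOct →L[ℝ] SplitOct)).toLinearMap.comp ocrossₗ)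

@[simp] lemma ocrossL_apply (z w : SplitOct) : ocrossL z w = ocross z w := rfl

def oreₗ : SplitOct →ₗ[ℝ] ℝ where
  toFun z := z.1.re
  map_add' _ _ := rfl
  map_smul' _ _ := rfl

def oreL : SplitOct →L[ℝ] ℝ := LinearMap.toContinuousLinearMap oreₗ

@[simp] lemma oreL_apply (z : SplitOct) : oreL z = z.1.re := rfl

theorem second_fundamental_form_commutes_with_J
    (f : ℂ → SplitOct) (hf : ContDiff ℝ ⊤ f)
    (hIm : ∀ p, IsIm (f p)) (hq : ∀ p, q (f p) = -1)
    (hhol : ∀ p v, fderiv ℝ f p (Complex.I * v) = ocross (f p) (fderiv ℝ f p v))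
    (himm : ∀ p, fderiv ℝ f p 1 ≠ 0)
    (hspacelike : ∀ p (v : ℂ), v ≠ 0 → 0 < oin (fderiv ℝ f p v) (fderiv ℝ f p v)) :
    ∀ (p : ℂ) (X Y : ℂ),
      D2 f p (Complex.I * X) Y - ocross (f p) (D2 f p X Y) ∈
        Submodule.span ℝ {f p, fderiv ℝ f p 1, fderiv ℝ f p Complex.I} ∧
      D2 f p X (Complex.I * Y) - ocross (f p) (D2 f p X Y) ∈
        Submodule.span ℝ {f p, fderiv ℝ f p 1, fderiv ℝ f p Complex.I} ∧
      D2 f p 1 1 + D2 f p Complex.I Complex.I ∈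
        Submodule.span ℝ {f p, fderiv ℝ f p 1, fderiv ℝ f p Complex.I} := by
  intro p X Y
  have hdf : ∀ x, HasFDerivAt f (fderiv ℝ f x) x :=
    fun x => (hf.differentiable (by simp) x).hasFDerivAt
  have hcf' : ContDiff ℝ ⊤ (fderiv ℝ f) := hf.fderiv_right le_top
  have hdf' : ∀ x, HasFDerivAt (fderiv ℝ f) (fderiv ℝ (fderiv ℝ f) x) x :=
    fun x => (hcf'.differentiable (by simp) x).hasFDerivAt
  -- derivative of the evaluated first derivative
  have hev : ∀ (x : ℂ) (v : ℂ),
      HasFDerivAt (fun y => fderiv ℝ f y v) ((fderiv ℝ (fderiv ℝ f) x).flip v) x := by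
    intro x v
    have h := (hdf' x).clm_apply (hasFDerivAt_const v x)
    simpa using h
  have hD2 : ∀ v w : ℂ, D2 f p v w = fderiv ℝ (fderiv ℝ f) p w v := by
    intro v w
    simp only [D2]
    rw [(hev p v).fderiv]
    rfl
  have hsymm : ∀ v w : ℂ, fderiv ℝ (fderiv ℝ f) p v w = fderiv ℝ (fderiv ℝ f) p w v :=
    second_derivative_symmetric hdf (hdf' p)
  -- first derivatives are imaginary
  have hImd : ∀ (x : ℂ) (v : ℂ), IsIm (fderiv ℝ f x v) := by
    intro x v
    have h1 : HasFDerivAt (fun y => oreL (f y)) (oreL.comp (fderiv ℝ f x)) x :=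
      oreL.hasFDerivAt.comp x (hdf x)
    have heq : (fun y => oreL (f y)) = fun _ : ℂ => (0 : ℝ) :=
      funext fun y => by simpa [IsIm] using hIm y
    rw [heq] at h1
    have h3 := h1.unique (hasFDerivAt_const 0 x)
    have h4 := congrArg (fun (L : ℂ →L[ℝ] ℝ) => L v) h3
    simpa [IsIm] using h4
  -- second derivatives are imaginary
  have hImd2 : ∀ w v : ℂ, IsIm (fderiv ℝ (fderiv ℝ f) p w v) := by
    intro w v
    have h2 : HasFDerivAt (fun y => oreL (fderiv ℝ f y v))
        (oreL.comp ((fderiv ℝ (fderiv ℝ f) p).flip v)) p :=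
      oreL.hasFDerivAt.comp p (hev p v)
    have heq : (fun y => oreL (fderiv ℝ f y v)) = fun _ : ℂ => (0 : ℝ) :=
      funext fun y => by simpa [IsIm] using hImd y v
    rw [heq] at h2
    have h3 := h2.unique (hasFDerivAt_const 0 p)
    have h4 := congrArg (fun (L : ℂ →L[ℝ] ℝ) => L w) h3
    simpa [IsIm] using h4
  -- the differentiated holomorphicity identity
  have key : ∀ v w : ℂ, fderiv ℝ (fderiv ℝ f) p w (Complex.I * v) =
      ocross (f p) (fderiv ℝ (fderiv ℝ f) p w v) +
        ocross (fderiv ℝ f p w) (fderiv ℝ f p v) := by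
    intro v w
    have hL : HasFDerivAt (fun y => fderiv ℝ f y (Complex.I * v))
        ((fderiv ℝ (fderiv ℝ f) p).flip (Complex.I * v)) p := hev p (Complex.I * v)
    have hc : HasFDerivAt (fun y => ocrossL (f y)) (ocrossL.comp (fderiv ℝ f p)) p :=
      ocrossL.hasFDerivAt.comp p (hdf p)
    have hR := hc.clm_apply (hev p v)
    have heq : (fun y => fderiv ℝ f y (Complex.I * v)) =
        fun y => (ocrossL (f y)) (fderiv ℝ f y v) := by
      funext y; simpa using hhol y v
    rw [heq] at hL
    have h3 := hL.unique hR
    have h4 := congrArg (fun (L : ℂ →L[ℝ] SplitOct) => L w) h3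
    simpa using h4
  set T := Submodule.span ℝ ({f p, fderiv ℝ f p 1, fderiv ℝ f p Complex.I} : Set SplitOct)
    with hT
  have hm0 : f p ∈ T := Submodule.subset_span (by simp)
  have hm1 : fderiv ℝ f p 1 ∈ T := Submodule.subset_span (by simp)
  have hm2 : fderiv ℝ f p Complex.I ∈ T := Submodule.subset_span (by simp)
  have he2 : fderiv ℝ f p Complex.I = ocross (f p) (fderiv ℝ f p 1) := by
    simpa using hhol p 1
  have hc12 : ocross (fderiv ℝ f p 1) (fderiv ℝ f p Complex.I) ∈ T := by
    rw [he2, L3' _ _ (hImd p 1) (hIm p)]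
    exact T.sub_mem (T.smul_mem _ hm1) (T.smul_mem _ hm0)
  have hc21 : ocross (fderiv ℝ f p Complex.I) (fderiv ℝ f p 1) ∈ T := by
    rw [L2' _ _ (hImd p Complex.I) (hImd p 1)]
    exact T.neg_mem hc12
  have hsplit : ∀ v : ℂ, fderiv ℝ f p v =
      v.re • fderiv ℝ f p 1 + v.im • fderiv ℝ f p Complex.I := by
    intro v
    conv_lhs => rw [show v = v.re • (1 : ℂ) + v.im • Complex.I by
      simp [Complex.real_smul]]
    rw [map_add, map_smul, map_smul]
  have hcross : ∀ v w : ℂ, ocross (fderiv ℝ f p v) (fderiv ℝ f p w) ∈ T := by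
    intro v w
    rw [hsplit v, hsplit w]
    simp only [ocross_add_left, ocross_add_right, ocross_smul_left, ocross_smul_right,
      L1' _ (hImd p 1), L1' _ (hImd p Complex.I), smul_zero, add_zero, zero_add]
    exact T.add_mem (T.smul_mem _ (T.smul_mem _ hc21)) (T.smul_mem _ (T.smul_mem _ hc12))
  refine ⟨?_, ?_, ?_⟩
  · rw [hD2 (Complex.I * X) Y, hD2 X Y, key X Y]
    simpa using hcross Y X
  · rw [hD2 X (Complex.I * Y), hD2 X Y, hsymm (Complex.I * Y) X, key Y X, hsymm Y X]
    simpa using hcross X Y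
  · rw [hD2 1 1, hD2 Complex.I Complex.I]
    have h1 : fderiv ℝ (fderiv ℝ f) p Complex.I Complex.I =
        ocross (f p) (fderiv ℝ (fderiv ℝ f) p Complex.I 1) +
          ocross (fderiv ℝ f p Complex.I) (fderiv ℝ f p 1) := by
      simpa using key 1 Complex.I
    have h2 : fderiv ℝ (fderiv ℝ f) p Complex.I 1 =
        ocross (f p) (fderiv ℝ (fderiv ℝ f) p 1 1) := by
      rw [hsymm Complex.I 1]
      simpa [L1' _ (hImd p 1)] using key 1 1
    have h3 : ocross (f p) (ocross (f p) (fderiv ℝ (fderiv ℝ f) p 1 1)) =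
        -(oin (f p) (fderiv ℝ (fderiv ℝ f) p 1 1) • f p) -
          fderiv ℝ (fderiv ℝ f) p 1 1 := by
      rw [L2' _ _ (hIm p) (hImd2 1 1), ocross_neg_right,
        L3' (f p) _ (hIm p) (hImd2 1 1), hq p]
      module
    rw [h1, h2, h3]
    have hre : fderiv ℝ (fderiv ℝ f) p 1 1 +
        (-(oin (f p) (fderiv ℝ (fderiv ℝ f) p 1 1) • f p) -
          fderiv ℝ (fderiv ℝ f) p 1 1 +
            ocross (fderiv ℝ f p Complex.I) (fderiv ℝ f p 1)) =
        -(oin (f p) (fderiv ℝ (fderiv ℝ f) p 1 1) • f p) +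
          ocross (fderiv ℝ f p Complex.I) (fderiv ℝ f p 1) := by abel
    rw [hre]
    exact T.add_mem (T.neg_mem (T.smul_mem _ hm0)) hc21



end SplitOct
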